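/- arXiv:2203.15305 — 3 statements merged into one kernel-verified Lean document; each statement's English description precedes it below -/
import Mathlib

section
/- Exponential tracking of the gradient prediction-correction flow: assume f_u(y, t) is twice continuously differentiable, strongly convex in y with ∇_yy f_u ≽ q_c·I uniformly, and y(t) evolves according to ẏ = -γ ∇_y f_u(y,t) - (∇_yy f_u(y,t))⁻¹ ∇_yt f_u(y,t) with γ > 0. Then the residual σ(t) = ∇_y f_u(y(t), t) satisfies ‖σ(t)‖ ≤ ‖σ(t₀)‖ e^{-q_c γ (t-t₀)}, and hence ‖y(t) - y*(t)‖ ≤ (‖σ(t₀)‖/q_c) e^{-q_c γ (t-t₀)}, where y*(t) is the (unique) minimizer of f_u(·, t). -/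
open scoped RealInnerProductSpace

/-- Exponential tracking of the gradient prediction-correction flow (Theorem 1,
gradient case): along `ẏ = -γ∇_y f_u - (∇_yy f_u)⁻¹ ∇_yt f_u`, the residual
`σ(t) = ∇_y f_u(y(t), t)` decays like `e^{-q_c γ (t - t₀)}`, and
`‖y(t) - y*(t)‖ ≤ (‖σ(t₀)‖/q_c) e^{-q_c γ (t - t₀)}`. -/
theorem gradient_prediction_correction_tracking (m : ℕ) (t0 γ qc : ℝ)
    (hγ : 0 < γ) (hqc : 0 < qc)
    (F : EuclideanSpace ℝ (Fin m) → ℝ → ℝ)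
    (hF : ContDiff ℝ 2 (fun p : EuclideanSpace ℝ (Fin m) × ℝ => F p.1 p.2))
    (Hyy : EuclideanSpace ℝ (Fin m) → ℝ →
      (EuclideanSpace ℝ (Fin m) →L[ℝ] EuclideanSpace ℝ (Fin m)))
    (Hyt : EuclideanSpace ℝ (Fin m) → ℝ → EuclideanSpace ℝ (Fin m))
    (hHyy : ∀ y t, HasFDerivAt (fun z => gradient (fun w => F w t) z) (Hyy y t) y)
    (hHyt : ∀ y t, HasDerivAt (fun s => gradient (fun w => F w s) y) (Hyt y t) t)
    (hstrong : ∀ y t (v : EuclideanSpace ℝ (Fin m)),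
      qc * ‖v‖ ^ 2 ≤ ⟪Hyy y t v, v⟫)
    (Hinv : EuclideanSpace ℝ (Fin m) → ℝ →
      (EuclideanSpace ℝ (Fin m) →L[ℝ] EuclideanSpace ℝ (Fin m)))
    (hHinv : ∀ y t, (Hinv y t).comp (Hyy y t) = ContinuousLinearMap.id ℝ _ ∧
      (Hyy y t).comp (Hinv y t) = ContinuousLinearMap.id ℝ _)
    (y : ℝ → EuclideanSpace ℝ (Fin m))
    (hdyn : ∀ t, HasDerivAt y
      (-(γ • gradient (fun w => F w t) (y t)) - Hinv (y t) t (Hyt (y t) t)) t)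
    (ystar : ℝ → EuclideanSpace ℝ (Fin m))
    (hystar : ∀ t, gradient (fun w => F w t) (ystar t) = 0) :
    ∀ t, t0 ≤ t →
      ‖gradient (fun w => F w t) (y t)‖ ≤
        ‖gradient (fun w => F w t0) (y t0)‖ * Real.exp (-qc * γ * (t - t0)) ∧
      ‖y t - ystar t‖ ≤
        (‖gradient (fun w => F w t0) (y t0)‖ / qc) *
          Real.exp (-qc * γ * (t - t0)) := by

  -- the joint gradient map
  set g : EuclideanSpace ℝ (Fin m) × ℝ → EuclideanSpace ℝ (Fin m) := fun p =>
    (InnerProductSpace.toDual ℝ (EuclideanSpace ℝ (Fin m))).symm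
      ((fderiv ℝ (fun q : EuclideanSpace ℝ (Fin m) × ℝ => F q.1 q.2) p).comp
        (ContinuousLinearMap.inl ℝ (EuclideanSpace ℝ (Fin m)) ℝ)) with hg_def
  have hgrad : ∀ p : EuclideanSpace ℝ (Fin m) × ℝ,
      gradient (fun w => F w p.2) p.1 = g p := by
    intro p
    have hd : HasFDerivAt (fun w => F w p.2)
        ((fderiv ℝ (fun q : EuclideanSpace ℝ (Fin m) × ℝ => F q.1 q.2) p).comp
          (ContinuousLinearMap.inl ℝ (EuclideanSpace ℝ (Fin m)) ℝ)) p.1 := by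
      have := ((hF.differentiable (by norm_num)) p).hasFDerivAt
      exact this.comp p.1 (hasFDerivAt_prodMk_left (𝕜 := ℝ) p.1 p.2)
    rw [gradient, hd.fderiv]
  have hgC1 : ContDiff ℝ 1 g := by
    have h1 : ContDiff ℝ 1
        (fderiv ℝ (fun q : EuclideanSpace ℝ (Fin m) × ℝ => F q.1 q.2)) :=
      hF.fderiv_right (le_refl _)
    have h2 : ContDiff ℝ 1 (fun T : EuclideanSpace ℝ (Fin m) × ℝ →L[ℝ] ℝ =>
        T.comp (ContinuousLinearMap.inl ℝ (EuclideanSpace ℝ (Fin m)) ℝ)) :=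
      ((ContinuousLinearMap.compL ℝ (EuclideanSpace ℝ (Fin m))
        (EuclideanSpace ℝ (Fin m) × ℝ) ℝ).flip
        (ContinuousLinearMap.inl ℝ (EuclideanSpace ℝ (Fin m)) ℝ)).contDiff
    exact ((InnerProductSpace.toDual ℝ (EuclideanSpace ℝ (Fin m))).symm.contDiff).comp
      (h2.comp h1)
  have hgdiff : ∀ p : EuclideanSpace ℝ (Fin m) × ℝ, HasFDerivAt g (fderiv ℝ g p) p :=
    fun p => ((hgC1.differentiable (by norm_num)) p).hasFDerivAt
  -- the residual
  set σ : ℝ → EuclideanSpace ℝ (Fin m) := fun t => gradient (fun w => F w t) (y t)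
    with hσ_def
  have hσg : ∀ t, σ t = g (y t, t) := fun t => hgrad (y t, t)
  -- identify partial derivatives of g with Hyy and Hyt
  have hpart1 : ∀ p : EuclideanSpace ℝ (Fin m) × ℝ,
      (fderiv ℝ g p).comp (ContinuousLinearMap.inl ℝ (EuclideanSpace ℝ (Fin m)) ℝ)
        = Hyy p.1 p.2 := by
    intro p
    have h1 : HasFDerivAt (fun z : EuclideanSpace ℝ (Fin m) => g (z, p.2))
        ((fderiv ℝ g p).comp (ContinuousLinearMap.inl ℝ (EuclideanSpace ℝ (Fin m)) ℝ))
        p.1 := by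
      have := (hgdiff p).comp p.1 (hasFDerivAt_prodMk_left (𝕜 := ℝ) p.1 p.2)
      exact this
    have h2 : HasFDerivAt (fun z : EuclideanSpace ℝ (Fin m) => g (z, p.2))
        (Hyy p.1 p.2) p.1 := by
      refine (hHyy p.1 p.2).congr_of_eventuallyEq ?_
      filter_upwards with z using (hgrad (z, p.2)).symm
    exact h1.unique h2
  have hpart2 : ∀ p : EuclideanSpace ℝ (Fin m) × ℝ,
      fderiv ℝ g p (0, 1) = Hyt p.1 p.2 := by
    intro p
    have hc : HasDerivAt (fun s : ℝ => ((p.1 : EuclideanSpace ℝ (Fin m)), s))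
        ((0 : EuclideanSpace ℝ (Fin m)), (1 : ℝ)) p.2 :=
      (hasDerivAt_const p.2 p.1).prodMk (hasDerivAt_id p.2)
    have h1 : HasDerivAt (fun s : ℝ => g (p.1, s)) (fderiv ℝ g p (0, 1)) p.2 := by
      have := (hgdiff p).comp_hasDerivAt p.2 hc
      exact this
    have h2 : HasDerivAt (fun s : ℝ => g (p.1, s)) (Hyt p.1 p.2) p.2 := by
      refine (hHyt p.1 p.2).congr_of_eventuallyEq ?_
      filter_upwards with s using (hgrad (p.1, s)).symm
    exact h1.unique h2
  -- derivative of σ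
  have hσ' : ∀ t, HasDerivAt σ (-(γ • (Hyy (y t) t (σ t)))) t := by
    intro t
    have hc : HasDerivAt (fun s : ℝ => (y s, s))
        ((-(γ • σ t) - Hinv (y t) t (Hyt (y t) t), (1 : ℝ))) t :=
      (hdyn t).prodMk (hasDerivAt_id t)
    have h1 : HasDerivAt (fun s : ℝ => g (y s, s))
        (fderiv ℝ g (y t, t) (-(γ • σ t) - Hinv (y t) t (Hyt (y t) t), (1 : ℝ))) t := by
      have := (hgdiff (y t, t)).comp_hasDerivAt (f := fun s : ℝ => (y s, s)) t hc
      exact this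
    have h2 : HasDerivAt σ
        (fderiv ℝ g (y t, t) (-(γ • σ t) - Hinv (y t) t (Hyt (y t) t), (1 : ℝ))) t := by
      refine h1.congr_of_eventuallyEq ?_
      filter_upwards with s using (hσg s)
    have hsplit : ((-(γ • σ t) - Hinv (y t) t (Hyt (y t) t), (1 : ℝ)) :
        EuclideanSpace ℝ (Fin m) × ℝ)
        = ((-(γ • σ t) - Hinv (y t) t (Hyt (y t) t), (0 : ℝ)) :
            EuclideanSpace ℝ (Fin m) × ℝ) + (0, 1) := by
      simp
    have hval : fderiv ℝ g (y t, t) (-(γ • σ t) - Hinv (y t) t (Hyt (y t) t), (1 : ℝ))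
        = -(γ • (Hyy (y t) t (σ t))) := by
      rw [hsplit, map_add, hpart2 (y t, t)]
      have hA : fderiv ℝ g (y t, t)
          ((-(γ • σ t) - Hinv (y t) t (Hyt (y t) t), (0 : ℝ)))
          = Hyy (y t) t (-(γ • σ t) - Hinv (y t) t (Hyt (y t) t)) := by
        have := congrArg (fun (T : EuclideanSpace ℝ (Fin m) →L[ℝ]
          EuclideanSpace ℝ (Fin m)) =>
          T (-(γ • σ t) - Hinv (y t) t (Hyt (y t) t))) (hpart1 (y t, t))
        simpa using this
      rw [hA, map_sub]
      have hinv : Hyy (y t) t (Hinv (y t) t (Hyt (y t) t)) = Hyt (y t) t := by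
        have := congrArg (fun (T : EuclideanSpace ℝ (Fin m) →L[ℝ]
          EuclideanSpace ℝ (Fin m)) => T (Hyt (y t) t)) (hHinv (y t) t).2
        simpa using this
      rw [hinv]
      simp [smul_neg]
    rw [hval] at h2
    exact h2
  -- Grönwall-type decay of ‖σ‖²
  set φ : ℝ → ℝ := fun t => ⟪σ t, σ t⟫ with hφ_def
  have hφeq : ∀ t, φ t = ‖σ t‖ ^ 2 := fun t => real_inner_self_eq_norm_sq (σ t)
  have hφ' : ∀ t, HasDerivAt φ (2 * ⟪-(γ • (Hyy (y t) t (σ t))), σ t⟫) t := by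
    intro t
    have := HasDerivAt.inner ℝ (hσ' t) (hσ' t)
    convert this using 1
    · rfl
    · rfl
    rw [real_inner_comm]
    ring
  have hφ'le : ∀ t, 2 * ⟪-(γ • (Hyy (y t) t (σ t))), σ t⟫ ≤ -(2 * qc * γ) * φ t := by
    intro t
    have h1 := hstrong (y t) t (σ t)
    have h2 : ⟪-(γ • (Hyy (y t) t (σ t))), σ t⟫
        = -(γ * ⟪Hyy (y t) t (σ t), σ t⟫) := by
      simp [inner_smul_left]
    rw [h2, hφeq]
    nlinarith [hγ.le, hqc.le]
  set ψ : ℝ → ℝ := fun t => Real.exp (2 * qc * γ * (t - t0)) * φ t with hψ_def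
  have hψ' : ∀ t, HasDerivAt ψ
      (2 * qc * γ * Real.exp (2 * qc * γ * (t - t0)) * φ t
        + Real.exp (2 * qc * γ * (t - t0))
          * (2 * ⟪-(γ • (Hyy (y t) t (σ t))), σ t⟫)) t := by
    intro t
    have he : HasDerivAt (fun t => Real.exp (2 * qc * γ * (t - t0)))
        (2 * qc * γ * Real.exp (2 * qc * γ * (t - t0))) t := by
      have h0 : HasDerivAt (fun t : ℝ => 2 * qc * γ * (t - t0)) (2 * qc * γ) t := by
        simpa using (((hasDerivAt_id t).sub_const t0).const_mul (2 * qc * γ))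
      simpa [mul_comm] using h0.exp
    exact he.mul (hφ' t)
  have hψanti : Antitone ψ := by
    apply antitone_of_deriv_nonpos
    · intro t
      exact (hψ' t).differentiableAt
    · intro t
      rw [(hψ' t).deriv]
      have h1 := hφ'le t
      have h2 : (0 : ℝ) < Real.exp (2 * qc * γ * (t - t0)) := Real.exp_pos _
      nlinarith
  have hσbound : ∀ t, t0 ≤ t →
      ‖σ t‖ ≤ ‖σ t0‖ * Real.exp (-qc * γ * (t - t0)) := by
    intro t ht
    have h1 : Real.exp (2 * qc * γ * (t - t0)) * φ t
        ≤ Real.exp (2 * qc * γ * (t0 - t0)) * φ t0 := hψanti ht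
    have h3 : Real.exp (2 * qc * γ * (t - t0)) * ‖σ t‖ ^ 2 ≤ ‖σ t0‖ ^ 2 := by
      rw [hφeq, hφeq] at h1
      simpa using h1
    have h4 : ‖σ t‖ ^ 2 ≤ (‖σ t0‖ * Real.exp (-qc * γ * (t - t0))) ^ 2 := by
      have hepos : (0 : ℝ) < Real.exp (2 * qc * γ * (t - t0)) := Real.exp_pos _
      have hsq : (Real.exp (-qc * γ * (t - t0))) ^ 2
          * Real.exp (2 * qc * γ * (t - t0)) = 1 := by
        rw [sq, ← Real.exp_add, ← Real.exp_add]
        ring_nf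
        exact Real.exp_zero
      have hge : (0 : ℝ) ≤ (Real.exp (-qc * γ * (t - t0))) ^ 2 := by positivity
      nlinarith [sq_nonneg (‖σ t0‖)]
    calc ‖σ t‖ = Real.sqrt (‖σ t‖ ^ 2) := by
          rw [Real.sqrt_sq (norm_nonneg _)]
      _ ≤ Real.sqrt ((‖σ t0‖ * Real.exp (-qc * γ * (t - t0))) ^ 2) :=
          Real.sqrt_le_sqrt h4
      _ = ‖σ t0‖ * Real.exp (-qc * γ * (t - t0)) := by
          rw [Real.sqrt_sq (by positivity)]
  -- strong convexity: ‖y t - ystar t‖ ≤ ‖σ t‖ / qc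
  have hdist : ∀ t, ‖y t - ystar t‖ ≤ ‖σ t‖ / qc := by
    intro t
    set d : EuclideanSpace ℝ (Fin m) := y t - ystar t with hd_def
    by_cases hd0 : d = 0
    · rw [hd0]
      simp
      positivity
    · have hpath : ∀ s : ℝ, HasDerivAt (fun s : ℝ => ystar t + s • d) d s := by
        intro s
        simpa using ((hasDerivAt_id s).smul_const d).const_add (ystar t)
      set h : ℝ → ℝ := fun s => ⟪gradient (fun w => F w t) (ystar t + s • d), d⟫
        with hh_def
      have hh' : ∀ s : ℝ, HasDerivAt h ⟪Hyy (ystar t + s • d) t d, d⟫ s := by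
        intro s
        have h1 : HasDerivAt
            (fun s : ℝ => gradient (fun w => F w t) (ystar t + s • d))
            (Hyy (ystar t + s • d) t d) s :=
          (hHyy (ystar t + s • d) t).comp_hasDerivAt (f := fun s : ℝ => ystar t + s • d) s (hpath s)
        have := HasDerivAt.inner ℝ h1 (hasDerivAt_const s d)
        simpa [hh_def] using this
      obtain ⟨c, _, hc⟩ := exists_hasDerivAt_eq_slope h
        (fun s => ⟪Hyy (ystar t + s • d) t d, d⟫) (by norm_num : (0:ℝ) < 1)
        (fun s _ => (hh' s).continuousAt.continuousWithinAt)
        (fun s _ => hh' s)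
      have h0 : h 0 = 0 := by
        simp only [hh_def, zero_smul, add_zero, hystar t]
        simp
      have h1v : h 1 = ⟪σ t, d⟫ := by
        have hyd : ystar t + (1 : ℝ) • d = y t := by
          rw [one_smul, hd_def]
          abel
        simp only [hh_def, hyd, hσ_def]
      have hkey : qc * ‖d‖ ^ 2 ≤ ⟪σ t, d⟫ := by
        have hs := hstrong (ystar t + c • d) t d
        rw [hc, h0, h1v] at hs
        simpa using hs
      have hcs : ⟪σ t, d⟫ ≤ ‖σ t‖ * ‖d‖ := real_inner_le_norm _ _
      have hdn : (0 : ℝ) < ‖d‖ := norm_pos_iff.mpr hd0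
      have heq : qc * ‖d‖ ^ 2 = (qc * ‖d‖) * ‖d‖ := by ring
      have h5 : (qc * ‖d‖) * ‖d‖ ≤ ‖σ t‖ * ‖d‖ := by linarith
      have h6 : qc * ‖d‖ ≤ ‖σ t‖ := le_of_mul_le_mul_right h5 hdn
      rw [le_div_iff₀ hqc]
      linarith
  intro t ht
  have hb := hσbound t ht
  refine ⟨hb, ?_⟩
  calc ‖y t - ystar t‖ ≤ ‖σ t‖ / qc := hdist t
    _ ≤ (‖σ t0‖ * Real.exp (-qc * γ * (t - t0))) / qc := by gcongr
    _ = (‖σ t0‖ / qc) * Real.exp (-qc * γ * (t - t0)) := by ring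
end

section
/- Exponential tracking of the Newton prediction-correction flow: under the same smoothness and uniform strong convexity assumptions (∇_yy f_u ≽ q_c·I), if y(t) evolves according to ẏ = -(∇_yy f_u(y,t))⁻¹ ( γ ∇_y f_u(y,t) + ∇_yt f_u(y,t) ), then σ(t) = ∇_y f_u(y(t), t) satisfies d/dt σ(t) = -γ σ(t), so ‖σ(t)‖ = ‖σ(t₀)‖ e^{-γ(t-t₀)} and ‖y(t) - y*(t)‖ ≤ (‖σ(t₀)‖/q_c) e^{-γ(t-t₀)}. -/
open scoped RealInnerProductSpace

section Helpers

variable {m : ℕ}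

local notation "E" => EuclideanSpace ℝ (Fin m)

lemma sigma_chain (F : E → ℝ → ℝ)
    (hF : ContDiff ℝ 2 (fun p : E × ℝ => F p.1 p.2))
    (Hyy : E → ℝ → (E →L[ℝ] E)) (Hyt : E → ℝ → E)
    (hHyy : ∀ y t, HasFDerivAt (fun z => gradient (fun w => F w t) z) (Hyy y t) y)
    (hHyt : ∀ y t, HasDerivAt (fun s => gradient (fun w => F w s) y) (Hyt y t) t)
    (y : ℝ → E) (v : E) (t : ℝ) (hy : HasDerivAt y v t) :
    HasDerivAt (fun s => gradient (fun w => F w s) (y s))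
      (Hyy (y t) t v + Hyt (y t) t) t := by
  set J : E × ℝ → ℝ := fun p => F p.1 p.2 with hJ
  have hJd : Differentiable ℝ J := hF.differentiable (by norm_num)
  set G : E × ℝ → E := fun p =>
    (InnerProductSpace.toDual ℝ E).symm ((fderiv ℝ J p).comp (ContinuousLinearMap.inl ℝ E ℝ)) with hG
  have hGeq : ∀ p : E × ℝ, gradient (fun w => F w p.2) p.1 = G p := by
    intro p
    have h1 : HasFDerivAt (fun w : E => F w p.2)
        ((fderiv ℝ J p).comp (ContinuousLinearMap.inl ℝ E ℝ)) p.1 := by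
      have := HasFDerivAt.comp (g := J) (f := fun e : E => (e, p.2)) p.1 (hJd p).hasFDerivAt (hasFDerivAt_prodMk_left p.1 p.2)
      exact this
    exact (hasFDerivAt_iff_hasGradientAt.mp h1).gradient
  have hGc : ContDiff ℝ 1 G := by
    have h1 : ContDiff ℝ 1 (fderiv ℝ J) := hF.fderiv_right (by norm_num)
    have h2 : ContDiff ℝ 1 (fun p => (fderiv ℝ J p).comp (ContinuousLinearMap.inl ℝ E ℝ)) :=
      h1.clm_comp contDiff_const
    exact (InnerProductSpace.toDual ℝ E).symm.toContinuousLinearEquiv.toContinuousLinearMap.contDiff.comp h2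
  have hGd : HasFDerivAt G (fderiv ℝ G (y t, t)) (y t, t) :=
    ((hGc.differentiable (by norm_num)) _).hasFDerivAt
  set DG := fderiv ℝ G (y t, t) with hDG
  have hz : DG.comp (ContinuousLinearMap.inl ℝ E ℝ) = Hyy (y t) t := by
    have h1 : HasFDerivAt (fun z : E => G (z, t)) (DG.comp (ContinuousLinearMap.inl ℝ E ℝ)) (y t) :=
      HasFDerivAt.comp (g := G) (f := fun e : E => (e, t)) (y t) hGd (hasFDerivAt_prodMk_left (y t) t)
    have h2 : (fun z : E => G (z, t)) = fun z => gradient (fun w => F w t) z := by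
      funext z; exact (hGeq (z, t)).symm
    rw [h2] at h1
    exact h1.unique (hHyy (y t) t)
  have hs : DG (0, 1) = Hyt (y t) t := by
    have hp : HasDerivAt (fun s : ℝ => ((y t : E), s)) (0, 1) t :=
      (hasDerivAt_const t (y t)).prodMk (hasDerivAt_id t)
    have h1 : HasDerivAt (fun s : ℝ => G (y t, s)) (DG (0, 1)) t :=
      hGd.comp_hasDerivAt t hp
    have h2 : (fun s : ℝ => G (y t, s)) = fun s => gradient (fun w => F w s) (y t) := by
      funext s; exact (hGeq (y t, s)).symm
    rw [h2] at h1
    exact h1.unique (hHyt (y t) t)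
  have hp : HasDerivAt (fun s : ℝ => (y s, s)) ((v, 1) : E × ℝ) t :=
    hy.prodMk (hasDerivAt_id t)
  have h1 : HasDerivAt (fun s : ℝ => G (y s, s)) (DG (v, 1)) t :=
    HasFDerivAt.comp_hasDerivAt (l := G) (f := fun s : ℝ => (y s, s)) t hGd hp
  have h2 : (fun s : ℝ => G (y s, s)) = fun s => gradient (fun w => F w s) (y s) := by
    funext s; exact (hGeq (y s, s)).symm
  rw [h2] at h1
  have h3 : DG (v, 1) = Hyy (y t) t v + Hyt (y t) t := by
    have : ((v, 1) : E × ℝ) = (v, 0) + (0, 1) := by simp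
    rw [this, map_add, ← hs]
    congr 1
    rw [← hz]; rfl
  rwa [h3] at h1

lemma strong_bound (t qc : ℝ) (F : E → ℝ → ℝ)
    (Hyy : E → ℝ → (E →L[ℝ] E))
    (hHyy : ∀ y, HasFDerivAt (fun z => gradient (fun w => F w t) z) (Hyy y t) y)
    (hstrong : ∀ y (v : E), qc * ‖v‖ ^ 2 ≤ ⟪Hyy y t v, v⟫)
    (a b : E) (hb : gradient (fun w => F w t) b = 0) :
    qc * ‖a - b‖ ≤ ‖gradient (fun w => F w t) a‖ := by
  set g : E → E := fun z => gradient (fun w => F w t) z with hg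
  set d : E := a - b with hd
  by_cases hd0 : d = 0
  · have : a = b := by rwa [hd, sub_eq_zero] at hd0
    simp [← hd, hd0]
  set φ : ℝ → ℝ := fun θ => ⟪g (b + θ • d), d⟫ - θ * (qc * ‖d‖ ^ 2) with hφ
  have hpath : ∀ θ : ℝ, HasDerivAt (fun θ : ℝ => b + θ • d) d θ := by
    intro θ
    have := ((hasDerivAt_id θ).smul_const d).const_add b
    simpa using this
  have hφ' : ∀ θ : ℝ, HasDerivAt φ (⟪Hyy (b + θ • d) t d, d⟫ - qc * ‖d‖ ^ 2) θ := by
    intro θ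
    have h1 : HasDerivAt (fun θ : ℝ => g (b + θ • d)) (Hyy (b + θ • d) t d) θ :=
      by have := (hHyy (b + θ • d)).comp_hasDerivAt θ (hpath θ); exact this
    have h2 := (HasDerivAt.inner ℝ h1 (hasDerivAt_const θ d)).sub
      ((hasDerivAt_id θ).mul_const (qc * ‖d‖ ^ 2))
    simp at h2; exact h2
  have hmono : Monotone φ := by
    apply monotone_of_deriv_nonneg
    · exact fun θ => (hφ' θ).differentiableAt
    · intro θ
      rw [(hφ' θ).deriv]
      have := hstrong (b + θ • d) d
      linarith
  have h01 : φ 0 ≤ φ 1 := hmono zero_le_one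
  have hφ0 : φ 0 = 0 := by have hb' : g b = 0 := hb; simp [hφ, hb']
  have hφ1 : φ 1 = ⟪g a, d⟫ - qc * ‖d‖ ^ 2 := by simp [hφ, hd]
  have key : qc * ‖d‖ ^ 2 ≤ ⟪g a, d⟫ := by
    rw [hφ0, hφ1] at h01; linarith
  have hcs : ⟪g a, d⟫ ≤ ‖g a‖ * ‖d‖ := real_inner_le_norm _ _
  have hdpos : 0 < ‖d‖ := norm_pos_iff.mpr hd0
  have : qc * ‖d‖ * ‖d‖ ≤ ‖g a‖ * ‖d‖ := by
    calc qc * ‖d‖ * ‖d‖ = qc * ‖d‖ ^ 2 := by ring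
    _ ≤ ⟪g a, d⟫ := key
    _ ≤ ‖g a‖ * ‖d‖ := hcs
  exact le_of_mul_le_mul_right this hdpos

end Helpers

/-- Exponential tracking of the gradient prediction-correction flow (Theorem 1,
Newton case): along `ẏ = -(∇_yy f_u)⁻¹(γ∇_y f_u + ∇_yt f_u)`, the residual
`σ(t) = ∇_y f_u(y(t), t)` satisfies `d/dt σ = -γσ`, hence
`‖σ(t)‖ = ‖σ(t₀)‖ e^{-γ(t-t₀)}` and `‖y(t) - y*(t)‖ ≤ (‖σ(t₀)‖/q_c) e^{-γ(t-t₀)}`. -/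
theorem newton_prediction_correction_tracking (m : ℕ) (t0 γ qc : ℝ)
    (hγ : 0 < γ) (hqc : 0 < qc)
    (F : EuclideanSpace ℝ (Fin m) → ℝ → ℝ)
    (hF : ContDiff ℝ 2 (fun p : EuclideanSpace ℝ (Fin m) × ℝ => F p.1 p.2))
    (Hyy : EuclideanSpace ℝ (Fin m) → ℝ →
      (EuclideanSpace ℝ (Fin m) →L[ℝ] EuclideanSpace ℝ (Fin m)))
    (Hyt : EuclideanSpace ℝ (Fin m) → ℝ → EuclideanSpace ℝ (Fin m))
    (hHyy : ∀ y t, HasFDerivAt (fun z => gradient (fun w => F w t) z) (Hyy y t) y)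
    (hHyt : ∀ y t, HasDerivAt (fun s => gradient (fun w => F w s) y) (Hyt y t) t)
    (hstrong : ∀ y t (v : EuclideanSpace ℝ (Fin m)),
      qc * ‖v‖ ^ 2 ≤ ⟪Hyy y t v, v⟫)
    (Hinv : EuclideanSpace ℝ (Fin m) → ℝ →
      (EuclideanSpace ℝ (Fin m) →L[ℝ] EuclideanSpace ℝ (Fin m)))
    (hHinv : ∀ y t, (Hinv y t).comp (Hyy y t) = ContinuousLinearMap.id ℝ _ ∧
      (Hyy y t).comp (Hinv y t) = ContinuousLinearMap.id ℝ _)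
    (y : ℝ → EuclideanSpace ℝ (Fin m))
    (hdyn : ∀ t, HasDerivAt y
      (-(Hinv (y t) t (γ • gradient (fun w => F w t) (y t) + Hyt (y t) t))) t)
    (ystar : ℝ → EuclideanSpace ℝ (Fin m))
    (hystar : ∀ t, gradient (fun w => F w t) (ystar t) = 0) :
    ∀ t, t0 ≤ t →
      HasDerivAt (fun s => gradient (fun w => F w s) (y s))
        (-(γ • gradient (fun w => F w t) (y t))) t ∧
      ‖gradient (fun w => F w t) (y t)‖ =
        ‖gradient (fun w => F w t0) (y t0)‖ * Real.exp (-γ * (t - t0)) ∧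
      ‖y t - ystar t‖ ≤
        (‖gradient (fun w => F w t0) (y t0)‖ / qc) *
          Real.exp (-γ * (t - t0)) := by
  set σ : ℝ → EuclideanSpace ℝ (Fin m) := fun s => gradient (fun w => F w s) (y s) with hσdef
  have hσ' : ∀ s, HasDerivAt σ (-(γ • σ s)) s := by
    intro s
    have h := sigma_chain F hF Hyy Hyt hHyy hHyt y _ s (hdyn s)
    have e : Hyy (y s) s (-(Hinv (y s) s (γ • σ s + Hyt (y s) s))) + Hyt (y s) s
        = -(γ • σ s) := by
      rw [map_neg]
      have hid : Hyy (y s) s (Hinv (y s) s (γ • σ s + Hyt (y s) s))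
          = γ • σ s + Hyt (y s) s := by
        have := congrArg (fun L : EuclideanSpace ℝ (Fin m) →L[ℝ] EuclideanSpace ℝ (Fin m) =>
          L (γ • σ s + Hyt (y s) s)) (hHinv (y s) s).2
        simpa using this
      rw [hid]
      abel
    rwa [e] at h
  have hexp : ∀ s : ℝ, HasDerivAt (fun s : ℝ => Real.exp (γ * (s - t0)))
      (γ * Real.exp (γ * (s - t0))) s := by
    intro s
    have h1 : HasDerivAt (fun s : ℝ => γ * (s - t0)) γ s := by
      simpa using ((hasDerivAt_id s).sub_const t0).const_mul γ
    simpa [mul_comm] using h1.exp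
  have hφ0 : ∀ s : ℝ, HasDerivAt (fun s : ℝ => Real.exp (γ * (s - t0)) • σ s) 0 s := by
    intro s
    have h := (hexp s).smul (hσ' s)
    have e : Real.exp (γ * (s - t0)) • -(γ • σ s)
        + (γ * Real.exp (γ * (s - t0))) • σ s = 0 := by
      rw [smul_neg, smul_smul]
      rw [mul_comm (Real.exp (γ * (s - t0))) γ]
      exact neg_add_cancel _
    rwa [e] at h
  have hconst : ∀ s : ℝ, Real.exp (γ * (s - t0)) • σ s = σ t0 := by
    intro s
    have h := is_const_of_fderiv_eq_zero (𝕜 := ℝ)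
      (f := fun s : ℝ => Real.exp (γ * (s - t0)) • σ s)
      (fun x => (hφ0 x).differentiableAt)
      (fun x => by
        have := (hasDerivAt_iff_hasFDerivAt.mp (hφ0 x)).fderiv
        rw [this]; ext v; simp) s t0
    simpa using h
  intro t ht
  have hnorm : ‖σ t‖ = ‖σ t0‖ * Real.exp (-γ * (t - t0)) := by
    have h := hconst t
    have hσt : σ t = Real.exp (-γ * (t - t0)) • σ t0 := by
      have h2 : Real.exp (-γ * (t - t0)) • (Real.exp (γ * (t - t0)) • σ t)
          = Real.exp (-γ * (t - t0)) • σ t0 := by rw [h]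
      rwa [smul_smul, ← Real.exp_add,
        (by ring : -γ * (t - t0) + γ * (t - t0) = 0), Real.exp_zero, one_smul] at h2
    rw [hσt, norm_smul, Real.norm_eq_abs, abs_of_pos (Real.exp_pos _), mul_comm]
  refine ⟨hσ' t, hnorm, ?_⟩
  have hsb : qc * ‖y t - ystar t‖ ≤ ‖σ t‖ :=
    strong_bound t qc F Hyy (fun z => hHyy z t) (fun z v => hstrong z t v)
      (y t) (ystar t) (hystar t)
  rw [hnorm] at hsb
  rw [div_mul_eq_mul_div, le_div_iff₀ hqc]
  linarith [hsb]
end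

section
/- Safety under exponential tracking (Theorem 2 structure): let h : R^n → R be a CBF with ‖∇h(x)‖ ≤ b_h on the safe set, let u*(t) satisfy the CBF constraint L_f h(x) + L_g h(x) u* + α h(x) ≥ 0 along a trajectory x(t) of ẋ = f(x) + g(x)u, with u the applied input. Suppose the tracking residual e(t) = ‖∇_y f_u‖ satisfies d/dt e(t) ≤ -γ_hat e(t) and ‖u - u*‖ ≤ e(t)/q_c, with γ_hat > α. Define α' = q_c(γ_hat - α)/b_h and h_N(t) = -e(t) + α' h(x(t)). Then ḣ_N(t) ≥ -α h_N(t), and hence if h_N(t₀) ≥ 0 the system remains safe: h(x(t)) ≥ 0 for all t ≥ t₀. -/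
open scoped RealInnerProductSpace

/-- Safety under exponential tracking (Theorem 2): with CBF `h` having bounded
gradient, an optimal input `u*` satisfying the CBF constraint along the
trajectory of `ẋ = f(x) + g(x)u`, a tracking residual `e` decaying as
`ė ≤ -γ̂ e` with `‖u - u*‖ ≤ e/q_c` and `γ̂ > α`, the augmented barrier
`h_N = -e + α' h(x)` with `α' = q_c(γ̂ - α)/b_h` satisfies `ḣ_N ≥ -α h_N`;
hence `h_N(t₀) ≥ 0` implies `h(x(t)) ≥ 0` for all `t ≥ t₀`. -/
theorem safety_under_exponential_tracking (n k : ℕ) (t0 α γ qc bh : ℝ)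
    (hα : 0 < α) (hγα : α < γ) (hqc : 0 < qc) (hbh : 0 < bh)
    (h : EuclideanSpace ℝ (Fin n) → ℝ) (hhdiff : Differentiable ℝ h)
    (hgrad : ∀ x, 0 ≤ h x → ‖gradient h x‖ ≤ bh)
    (f : EuclideanSpace ℝ (Fin n) → EuclideanSpace ℝ (Fin n))
    (g : EuclideanSpace ℝ (Fin n) →
      (EuclideanSpace ℝ (Fin k) →L[ℝ] EuclideanSpace ℝ (Fin n)))
    (x : ℝ → EuclideanSpace ℝ (Fin n))
    (u ustar : ℝ → EuclideanSpace ℝ (Fin k))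
    (hdyn : ∀ t, t0 ≤ t → HasDerivAt x (f (x t) + g (x t) (u t)) t)
    (hcbf : ∀ t, t0 ≤ t →
      0 ≤ ⟪gradient h (x t), f (x t) + g (x t) (ustar t)⟫ + α * h (x t))
    (hLg : ∀ t, t0 ≤ t →
      |⟪gradient h (x t), g (x t) (u t - ustar t)⟫| ≤ bh * ‖u t - ustar t‖)
    (e : ℝ → ℝ) (henonneg : ∀ t, 0 ≤ e t)
    (hediff : ∀ t, t0 ≤ t → DifferentiableAt ℝ e t)
    (hedecay : ∀ t, t0 ≤ t → deriv e t ≤ -γ * e t)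
    (htrack : ∀ t, t0 ≤ t → ‖u t - ustar t‖ ≤ e t / qc) :
    (∀ t, t0 ≤ t →
      -α * (-e t + (qc * (γ - α) / bh) * h (x t)) ≤
        deriv (fun s => -e s + (qc * (γ - α) / bh) * h (x s)) t) ∧
    (0 ≤ -e t0 + (qc * (γ - α) / bh) * h (x t0) →
      ∀ t, t0 ≤ t → 0 ≤ h (x t)) := by
  set c := qc * (γ - α) / bh with hc
  have hcpos : 0 < c := div_pos (mul_pos hqc (sub_pos.mpr hγα)) hbh
  -- derivative of h ∘ x
  have hhx : ∀ t, t0 ≤ t → HasDerivAt (fun s => h (x s))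
      (⟪gradient h (x t), f (x t) + g (x t) (u t)⟫) t := by
    intro t ht
    have := ((hhdiff (x t)).hasGradientAt.hasFDerivAt).comp_hasDerivAt t (hdyn t ht)
    simpa [InnerProductSpace.toDual_apply_apply, Function.comp_def] using this
  -- derivative of h_N
  have hN : ∀ t, t0 ≤ t → HasDerivAt (fun s => -e s + c * h (x s))
      (-(deriv e t) + c * ⟪gradient h (x t), f (x t) + g (x t) (u t)⟫) t := by
    intro t ht
    exact ((hediff t ht).hasDerivAt.neg).add ((hhx t ht).const_mul c)
  -- derivative lower bound
  have key : ∀ t, t0 ≤ t →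
      -α * (-e t + c * h (x t)) ≤
        -(deriv e t) + c * ⟪gradient h (x t), f (x t) + g (x t) (u t)⟫ := by
    intro t ht
    have h1 : ⟪gradient h (x t), f (x t) + g (x t) (u t)⟫
        = ⟪gradient h (x t), f (x t) + g (x t) (ustar t)⟫
          + ⟪gradient h (x t), g (x t) (u t - ustar t)⟫ := by
      rw [← inner_add_right]
      congr 1
      simp [map_sub]
    have h2 : -α * h (x t) ≤ ⟪gradient h (x t), f (x t) + g (x t) (ustar t)⟫ := by
      have := hcbf t ht; linarith
    have h3 : -(bh * (e t / qc)) ≤ ⟪gradient h (x t), g (x t) (u t - ustar t)⟫ := by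
      have := (abs_le.mp (hLg t ht)).1
      have h4 : bh * ‖u t - ustar t‖ ≤ bh * (e t / qc) :=
        mul_le_mul_of_nonneg_left (htrack t ht) hbh.le
      linarith
    have h5 : γ * e t ≤ -(deriv e t) := by have := hedecay t ht; linarith
    have h6 : c * (bh * (e t / qc)) = (γ - α) * e t := by
      rw [hc]; field_simp
    have h7 : -α * (-e t + c * h (x t))
        ≤ γ * e t + c * (-α * h (x t) - bh * (e t / qc)) := by
      have : γ * e t + c * (-α * h (x t) - bh * (e t / qc))
          = γ * e t - (γ - α) * e t + c * (-α * h (x t)) := by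
        rw [mul_sub, h6]; ring
      rw [this]; ring_nf; rfl
    calc -α * (-e t + c * h (x t))
        ≤ γ * e t + c * (-α * h (x t) - bh * (e t / qc)) := h7
      _ ≤ -(deriv e t) + c * ⟪gradient h (x t), f (x t) + g (x t) (u t)⟫ := by
          rw [h1]
          have := mul_le_mul_of_nonneg_left (add_le_add h2 h3) hcpos.le
          nlinarith
  constructor
  · intro t ht
    rw [(hN t ht).deriv]
    exact key t ht
  · intro h0 t ht
    -- F s = exp (α s) * h_N s is monotone on Ici t0
    set F : ℝ → ℝ := fun s => Real.exp (α * s) * (-e s + c * h (x s)) with hF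
    have hFd : ∀ s ∈ Set.Ici t0, HasDerivAt F
        (α * Real.exp (α * s) * (-e s + c * h (x s))
          + Real.exp (α * s) * (-(deriv e s) + c * ⟪gradient h (x s), f (x s) + g (x s) (u s)⟫)) s := by
      intro s hs
      have hexp : HasDerivAt (fun r => Real.exp (α * r)) (α * Real.exp (α * s)) s := by
        have := (Real.hasDerivAt_exp (α * s)).comp s ((hasDerivAt_id s).const_mul α)
        simpa [mul_comm, Function.comp_def] using this
      exact hexp.mul (hN s hs)
    have hmono : MonotoneOn F (Set.Ici t0) := by
      apply monotoneOn_of_deriv_nonneg (convex_Ici t0)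
      · exact fun s hs => (hFd s hs).continuousAt.continuousWithinAt
      · intro s hs
        rw [interior_Ici] at hs
        exact (hFd s (Set.mem_Ici.mpr (le_of_lt hs))).differentiableAt.differentiableWithinAt
      · intro s hs
        rw [interior_Ici] at hs
        rw [(hFd s (Set.mem_Ici.mpr (le_of_lt hs))).deriv]
        have := key s (le_of_lt hs)
        have hep : 0 < Real.exp (α * s) := Real.exp_pos _
        nlinarith
    have hF0 : 0 ≤ F t0 := by
      have : (0:ℝ) ≤ Real.exp (α * t0) * (-e t0 + c * h (x t0)) :=
        mul_nonneg (Real.exp_pos _).le h0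
      simpa [hF] using this
    have hFt : 0 ≤ F t := le_trans hF0 (hmono Set.self_mem_Ici ht ht)
    have hep : 0 < Real.exp (α * t) := Real.exp_pos _
    have hNt : 0 ≤ -e t + c * h (x t) := nonneg_of_mul_nonneg_right (by simpa [hF] using hFt) hep
    have := henonneg t
    nlinarith
end
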